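/- In the Nesterov smoothing setup, let f(x) = h(x) + max_{u ∈ Q₂}{⟨Ax, u⟩ − φ(u)} with Q₁, Q₂ convex compact, h convex with L_h-Lipschitz gradient, φ continuous convex, and prox-functions d₁, d₂ on Q₁, Q₂ with D₁ = max_{x ∈ Q₁} d₁(x), D₂ = max_{u ∈ Q₂} d₂(u). If the accelerated gradient method (with Bregman divergence of d₁) is applied to minimize f_μ(x) = h(x) + max_{u ∈ Q₂}{⟨Ax, u⟩ − φ(u) − μ d₂(u)} over Q₁ with μ = (2‖A‖/(N+1))·√(D₁/D₂), then after N iterations the output y^N satisfies 0 ≤ f(y^N) − min_{x ∈ Q₁} f(x) ≤ 4‖A‖√(D₁D₂)/(N+1) + 4 L_h D₁/(N+1)². -/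

import Mathlib

open scoped RealInnerProductSpace

open Filter Set Topology


section Aux
variable {E : Type*} [NormedAddCommGroup E] [InnerProductSpace ℝ E] [CompleteSpace E]

/-- gradient of an inner-product linear functional -/
lemma ns_hasGradientAt_inner (q w₀ : E) : HasGradientAt (fun w => ⟪q, w⟫) q w₀ := by
  rw [hasGradientAt_iff_hasFDerivAt]
  exact (InnerProductSpace.toDual ℝ E q).hasFDerivAt

lemma ns_hasGradientAt_add {f g : E → ℝ} {p q x : E}
    (hf : HasGradientAt f p x) (hg : HasGradientAt g q x) :
    HasGradientAt (fun w => f w + g w) (p + q) x := by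
  rw [hasGradientAt_iff_hasFDerivAt] at *
  rw [map_add]; exact hf.add hg

lemma ns_hasGradientAt_add_const {f : E → ℝ} {p x : E} (c : ℝ)
    (hf : HasGradientAt f p x) : HasGradientAt (fun w => f w + c) p x := by
  rw [hasGradientAt_iff_hasFDerivAt] at *
  exact hf.add_const c

/-- derivative along a line -/
lemma ns_hasDerivAt_line {f : E → ℝ} {p : E} (x v : E) (t₀ : ℝ)
    (hf : HasGradientAt f p (x + t₀ • v)) :
    HasDerivAt (fun t : ℝ => f (x + t • v)) ⟪p, v⟫ t₀ := by
  have hline : HasDerivAt (fun t : ℝ => x + t • v) v t₀ := by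
    simpa using ((hasDerivAt_id t₀).smul_const v).const_add x
  have := (hf.hasFDerivAt).comp_hasDerivAt t₀ hline
  simpa [Function.comp_def] using this

/-- first-order optimality condition -/
lemma ns_foc {f : E → ℝ} {s : Set E} {a b p : E}
    (hs : Convex ℝ s) (ha : a ∈ s) (hb : b ∈ s) (hmin : IsMinOn f s a)
    (hf : HasGradientAt f p a) : 0 ≤ ⟪p, b - a⟫ := by
  have h1 : b - a ∈ posTangentConeAt s a :=
    sub_mem_posTangentConeAt_of_segment_subset (hs.segment_subset ha hb)
  have hloc : IsLocalMinOn f s a := hmin.localize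
  have := hloc.hasFDerivWithinAt_nonneg
    ((hasGradientAt_iff_hasFDerivAt.1 hf).hasFDerivWithinAt) h1
  simpa using this

/-- first-order lower bound for convex functions -/
lemma ns_convex_lb {f : E → ℝ} {s : Set E} (hf : ConvexOn ℝ s f)
    {a b p : E} (ha : a ∈ s) (hb : b ∈ s) (hg : HasGradientAt f p a) :
    f a + ⟪p, b - a⟫ ≤ f b := by
  set φ : ℝ → ℝ := fun t => f (a + t • (b - a)) with hφ
  have hd : HasDerivAt φ ⟪p, b - a⟫ 0 := by
    apply ns_hasDerivAt_line a (b - a) 0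
    simpa using hg
  have hslope : Tendsto (slope φ 0) (𝓝[>] 0) (𝓝 ⟪p, b - a⟫) :=
    (hasDerivAt_iff_tendsto_slope.1 hd).mono_left
      (nhdsWithin_mono 0 (fun t ht => ne_of_gt ht))
  have hev : ∀ᶠ t in 𝓝[>] (0:ℝ), slope φ 0 t ≤ f b - f a := by
    filter_upwards [Ioo_mem_nhdsGT_of_mem (by norm_num : (0:ℝ) ∈ Ico (0:ℝ) 1)] with t ht
    have h01 : a + t • (b - a) = (1 - t) • a + t • b := by
      rw [smul_sub, sub_smul, one_smul]; abel
    have hcv := hf.2 ha hb (by linarith [ht.2] : (0:ℝ) ≤ 1 - t) (le_of_lt ht.1)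
      (by ring)
    rw [← h01] at hcv
    have hφt : φ t - φ 0 ≤ t * (f b - f a) := by
      simp only [hφ, zero_smul, add_zero] at *
      have : f (a + t • (b - a)) ≤ (1-t) * f a + t * f b := by simpa [smul_eq_mul] using hcv
      nlinarith
    have hφ0 : φ 0 = f a := by simp [hφ]
    rw [slope_def_field]
    rw [hφ0] at hφt ⊢
    have := ht.1
    rw [div_le_iff₀ (by linarith : (0:ℝ) < t - 0)]
    calc φ t - f a ≤ t * (f b - f a) := hφt
      _ = (f b - f a) * (t - 0) := by ring
  have := le_of_tendsto hslope hev
  have hφ0 : φ 0 = f a := by simp [hφ]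
  linarith [this]

end Aux


section Aux2
variable {E : Type*} [NormedAddCommGroup E] [InnerProductSpace ℝ E] [CompleteSpace E]

/-- maximizer inequality for strongly concave functions -/
lemma ns_strong_max {s : Set E} (hs : Convex ℝ s) {ψ : E → ℝ} {m : ℝ}
    (hψ : ∀ u ∈ s, ∀ v ∈ s, ∀ a b : ℝ, 0 ≤ a → 0 ≤ b → a + b = 1 →
      a * ψ u + b * ψ v + a * b * (m / 2 * ‖u - v‖ ^ 2) ≤ ψ (a • u + b • v))
    {ustar : E} (hus : ustar ∈ s) (hmax : ∀ u ∈ s, ψ u ≤ ψ ustar)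
    {u : E} (hu : u ∈ s) : ψ u + m / 2 * ‖u - ustar‖ ^ 2 ≤ ψ ustar := by
  set c : ℝ := m / 2 * ‖u - ustar‖ ^ 2 with hc
  have key : ∀ t ∈ Ioo (0:ℝ) 1, ψ u - ψ ustar + (1 - t) * c ≤ 0 := by
    intro t ht
    have h1 := hψ u hu ustar hus t (1 - t) (le_of_lt ht.1) (by linarith [ht.2]) (by ring)
    have h2 : t • u + (1 - t) • ustar ∈ s := hs hu hus (le_of_lt ht.1) (by linarith [ht.2]) (by ring)
    have h3 := hmax _ h2
    have h4 : t * ψ u + (1 - t) * ψ ustar + t * (1 - t) * c ≤ ψ ustar := le_trans h1 h3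
    have ht0 := ht.1
    nlinarith
  have hlim : Tendsto (fun t : ℝ => ψ u - ψ ustar + (1 - t) * c) (𝓝[>] 0)
      (𝓝 (ψ u - ψ ustar + (1 - 0) * c)) := by
    apply Tendsto.mono_left _ nhdsWithin_le_nhds
    exact (tendsto_const_nhds.add (((tendsto_const_nhds.sub tendsto_id)).mul tendsto_const_nhds))
  have hle : ψ u - ψ ustar + (1 - 0) * c ≤ 0 := by
    refine le_of_tendsto hlim ?_
    filter_upwards [Ioo_mem_nhdsGT_of_mem (by norm_num : (0:ℝ) ∈ Ico (0:ℝ) 1)] with t ht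
    exact key t ht
  linarith

lemma ns_hasDerivAt_line' {f : E → ℝ} {g : E → E} (x v : E) (t₀ : ℝ)
    (hf : HasGradientAt f (g (x + t₀ • v)) (x + t₀ • v)) :
    HasDerivAt (fun t : ℝ => f (x + t • v)) ⟪g (x + t₀ • v), v⟫ t₀ := by
  have hline : HasDerivAt (fun t : ℝ => x + t • v) v t₀ := by
    simpa using ((hasDerivAt_id t₀).smul_const v).const_add x
  have := (hf.hasFDerivAt).comp_hasDerivAt t₀ hline
  simpa [Function.comp_def] using this

/-- descent lemma -/
lemma ns_descent {f : E → ℝ} {g : E → E} {L : ℝ} (hL : 0 ≤ L)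
    (hgrad : ∀ x, HasGradientAt f (g x) x)
    (hlip : ∀ a b, ‖g a - g b‖ ≤ L * ‖a - b‖) (a b : E) :
    f b ≤ f a + ⟪g a, b - a⟫ + L / 2 * ‖b - a‖ ^ 2 := by
  have hgcont : Continuous g := by
    have : LipschitzWith L.toNNReal g := by
      apply LipschitzWith.of_dist_le_mul
      intro p q
      rw [dist_eq_norm, dist_eq_norm]
      calc ‖g p - g q‖ ≤ L * ‖p - q‖ := hlip p q
        _ = L.toNNReal * ‖p - q‖ := by rw [Real.coe_toNNReal L hL]
    exact this.continuous
  set φ' : ℝ → ℝ := fun t => ⟪g (a + t • (b - a)), b - a⟫ with hφ'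
  have hφ'cont : Continuous φ' := by
    apply Continuous.inner
    · exact hgcont.comp (continuous_const.add (continuous_id.smul continuous_const))
    · exact continuous_const
  have hderiv : ∀ t ∈ uIcc (0:ℝ) 1, HasDerivAt (fun t : ℝ => f (a + t • (b - a))) (φ' t) t :=
    fun t _ => ns_hasDerivAt_line' a (b - a) t (hgrad _)
  have hint : IntervalIntegrable φ' MeasureTheory.volume 0 1 := hφ'cont.intervalIntegrable 0 1
  have hftc : ∫ t in (0:ℝ)..1, φ' t = f (a + (1:ℝ) • (b - a)) - f (a + (0:ℝ) • (b - a)) := by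
    exact intervalIntegral.integral_eq_sub_of_hasDerivAt hderiv hint
  simp only [one_smul, zero_smul, add_zero] at hftc
  have hab : a + (b - a) = b := by abel
  rw [hab] at hftc
  -- bound the integral
  have hbound : ∫ t in (0:ℝ)..1, φ' t ≤ ∫ t in (0:ℝ)..1, (⟪g a, b - a⟫ + L * ‖b - a‖ ^ 2 * t) := by
    apply intervalIntegral.integral_mono_on (by norm_num) hint
    · exact (by fun_prop : Continuous fun t : ℝ => ⟪g a, b - a⟫ + L * ‖b - a‖ ^ 2 * t).intervalIntegrable 0 1
    · intro t ht
      have h1 : φ' t - ⟪g a, b - a⟫ = ⟪g (a + t • (b - a)) - g a, b - a⟫ := by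
        rw [inner_sub_left]
      have h2 : ⟪g (a + t • (b - a)) - g a, b - a⟫ ≤ ‖g (a + t • (b - a)) - g a‖ * ‖b - a‖ :=
        real_inner_le_norm _ _
      have h3 : ‖g (a + t • (b - a)) - g a‖ ≤ L * (t * ‖b - a‖) := by
        have := hlip (a + t • (b - a)) a
        simpa [norm_smul, abs_of_nonneg ht.1] using this
      have h4 : ‖g (a + t • (b - a)) - g a‖ * ‖b - a‖ ≤ L * (t * ‖b - a‖) * ‖b - a‖ :=
        mul_le_mul_of_nonneg_right h3 (norm_nonneg _)
      nlinarith [norm_nonneg (b - a)]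
  have hrhs : ∫ t in (0:ℝ)..1, (⟪g a, b - a⟫ + L * ‖b - a‖ ^ 2 * t)
      = ⟪g a, b - a⟫ + L / 2 * ‖b - a‖ ^ 2 := by
    rw [intervalIntegral.integral_add (intervalIntegrable_const)
      ((by fun_prop : Continuous fun t : ℝ => L * ‖b - a‖ ^ 2 * t).intervalIntegrable 0 1)]
    have h5 : (∫ t in (0:ℝ)..1, L * ‖b - a‖ ^ 2 * t) = L * ‖b - a‖ ^ 2 * (((1:ℝ) ^ 2 - 0 ^ 2) / 2) := by
      rw [intervalIntegral.integral_const_mul, integral_id]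
    rw [h5, intervalIntegral.integral_const]
    norm_num
    ring
  linarith [hftc ▸ hbound, hrhs ▸ hbound]

end Aux2

lemma ns_stepsize (L : ℝ) (hL : 0 < L) (C α : ℕ → ℝ) (hC0 : C 0 = 0)
    (hroot : ∀ k, C k + α (k + 1) = L * α (k + 1) ^ 2)
    (hlargest : ∀ k, ∀ a : ℝ, C k + a = L * a ^ 2 → a ≤ α (k + 1))
    (hC : ∀ k, C (k + 1) = C k + α (k + 1)) :
    (∀ k, 0 ≤ C k) ∧ (∀ k, 1 / L ≤ α (k + 1)) ∧
      (∀ k : ℕ, 1 ≤ k → ((k:ℝ) + 1) ^ 2 / (4 * L) ≤ C k) := by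
  have hCnonneg : ∀ k, 0 ≤ C k := by
    intro k
    cases k with
    | zero => rw [hC0]
    | succ k => rw [hC k, hroot k]; positivity
  have hαlb : ∀ k, 1 / L ≤ α (k + 1) := by
    intro k
    set R : ℝ := 1 + 4 * L * C k with hR
    have hR1 : 1 ≤ R := by
      have := mul_nonneg (by positivity : (0:ℝ) ≤ 4 * L) (hCnonneg k)
      simp only [hR]; nlinarith
    have hR0 : 0 ≤ R := by linarith
    have hsqR : Real.sqrt R ^ 2 = R := Real.sq_sqrt hR0
    have hsqR1 : 1 ≤ Real.sqrt R := by
      rw [show (1:ℝ) = Real.sqrt 1 by simp]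
      exact Real.sqrt_le_sqrt hR1
    set aplus : ℝ := (1 + Real.sqrt R) / (2 * L) with haplus
    have hrt : C k + aplus = L * aplus ^ 2 := by
      simp only [haplus]
      field_simp
      nlinarith [hsqR]
    have h1 := hlargest k aplus hrt
    have h2 : 1 / L ≤ aplus := by
      simp only [haplus]
      rw [div_le_div_iff₀ hL (by positivity)]
      nlinarith
    linarith
  have hαpos : ∀ k, 0 < α (k + 1) := fun k =>
    lt_of_lt_of_le (by positivity) (hαlb k)
  have hα1 : α 1 = 1 / L := by
    have h1 := hroot 0
    rw [hC0] at h1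
    have h2 := hαpos 0
    have h3 : L * α 1 = 1 := by
      have h4 : α 1 * (L * α 1 - 1) = 0 := by nlinarith
      rcases mul_eq_zero.1 h4 with h | h
      · exact absurd h (ne_of_gt h2)
      · linarith
    field_simp at h3 ⊢
    linarith
  refine ⟨hCnonneg, hαlb, ?_⟩
  intro k hk
  induction k, hk using Nat.le_induction with
  | base =>
    have h5 : C 1 = 1 / L := by rw [hC 0, hC0, hα1]; ring
    rw [h5, div_le_div_iff₀ (by positivity) hL]
    norm_num
  | succ k hk ih =>
    have hroot' := hroot k
    have hC' := hC k
    have hαk := hαpos k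
    have hα1k : 1 ≤ L * α (k + 1) := by
      have h6 := hαlb k
      rw [div_le_iff₀ hL] at h6
      nlinarith
    have hksq : ((k:ℝ) + 1) ^ 2 ≤ 4 * L * C k := by
      rw [div_le_iff₀ (by positivity)] at ih
      nlinarith
    have hgt : (k:ℝ) + 1 < 2 * L * α (k + 1) - 1 := by
      by_contra hcon
      push_neg at hcon
      have hnn : (0:ℝ) ≤ (k:ℝ) + 1 := by positivity
      have h7 : (2 * L * α (k + 1) - 1) ^ 2 ≤ ((k:ℝ) + 1) ^ 2 := by nlinarith
      nlinarith
    have hCk1 : C (k + 1) = L * α (k + 1) ^ 2 := by rw [hC', hroot']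
    rw [hCk1, div_le_iff₀ (by positivity : (0:ℝ) < 4 * L)]
    have h8 : ((k:ℝ) + 2) ≤ 2 * L * α (k + 1) := by linarith
    push_cast
    nlinarith

set_option maxHeartbeats 1000000 in
/-- Nesterov smoothing combined with the accelerated gradient method: with
`μ = (2‖A‖/(N+1))√(D₁/D₂)`, after `N` iterations applied to `f_μ` on `Q₁`,
`0 ≤ f(y^N) - min_{Q₁} f ≤ 4‖A‖√(D₁D₂)/(N+1) + 4 L_h D₁/(N+1)²`. -/
theorem nesterov_smoothing_main
    {E₁ E₂ : Type*} [NormedAddCommGroup E₁] [InnerProductSpace ℝ E₁] [FiniteDimensional ℝ E₁]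
    [NormedAddCommGroup E₂] [InnerProductSpace ℝ E₂] [FiniteDimensional ℝ E₂]
    (Q₁ : Set E₁) (hQ₁conv : Convex ℝ Q₁) (hQ₁comp : IsCompact Q₁) (hQ₁ne : Q₁.Nonempty)
    (Q₂ : Set E₂) (hQ₂conv : Convex ℝ Q₂) (hQ₂comp : IsCompact Q₂) (hQ₂ne : Q₂.Nonempty)
    (A : E₁ →L[ℝ] E₂) (Astar : E₂ →L[ℝ] E₁)
    (hadj : ∀ (x : E₁) (u : E₂), ⟪A x, u⟫ = ⟪Astar u, x⟫)
    (φ : E₂ → ℝ) (hφc : ContinuousOn φ Q₂) (hφconv : ConvexOn ℝ Q₂ φ)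
    (h : E₁ → ℝ) (hhconv : ConvexOn ℝ Set.univ h)
    (gh : E₁ → E₁) (Lh : ℝ) (hLh : 0 ≤ Lh)
    (hgh : ∀ x, HasGradientAt h (gh x) x)
    (hghL : ∀ x y, ‖gh x - gh y‖ ≤ Lh * ‖x - y‖)
    -- the prox-function d₁ on Q₁ and its Bregman divergence
    (d₁ : E₁ → ℝ) (gd₁ : E₁ → E₁)
    (hgd₁ : ∀ x, HasGradientAt d₁ (gd₁ x) x)
    (hd₁sc : ∀ x y, d₁ x + ⟪gd₁ x, y - x⟫ + 1 / 2 * ‖y - x‖ ^ 2 ≤ d₁ y)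
    (hd₁0 : ∀ x ∈ Q₁, 0 ≤ d₁ x)
    (V₁ : E₁ → E₁ → ℝ) (hV₁ : ∀ w v, V₁ w v = d₁ v - d₁ w - ⟪gd₁ w, v - w⟫)
    -- the prox-function d₂ on Q₂
    (d₂ : E₂ → ℝ) (hd₂c : ContinuousOn d₂ Q₂) (hd₂0 : ∀ u ∈ Q₂, 0 ≤ d₂ u)
    (hd₂sc : StrongConvexOn Q₂ 1 d₂)
    (D₁ D₂ : ℝ) (hD₁ : IsGreatest (d₁ '' Q₁) D₁) (hD₂ : IsGreatest (d₂ '' Q₂) D₂)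
    (hD₁pos : 0 < D₁) (hD₂pos : 0 < D₂)
    (nA : ℝ) (hnApos : 0 < nA)
    (hnA : IsGreatest {r : ℝ | ∃ (x : E₁) (u : E₂), ‖x‖ ≤ 1 ∧ ‖u‖ ≤ 1 ∧ r = ⟪A x, u⟫} nA)
    (N : ℕ) (hN : 1 ≤ N)
    (μ : ℝ) (hμdef : μ = 2 * nA / ((N : ℝ) + 1) * Real.sqrt (D₁ / D₂))
    -- the smoothed objective and its maximizer
    (uμ : E₁ → E₂) (huμmem : ∀ x, uμ x ∈ Q₂)
    (huμmax : ∀ x, ∀ u ∈ Q₂,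
      ⟪A x, u⟫ - φ u - μ * d₂ u ≤ ⟪A x, uμ x⟫ - φ (uμ x) - μ * d₂ (uμ x))
    (f fμ : E₁ → ℝ)
    (hfdef : ∀ x, f x = h x + sSup ((fun u => ⟪A x, u⟫ - φ u) '' Q₂))
    (hfμdef : ∀ x, fμ x = h x + (⟪A x, uμ x⟫ - φ (uμ x) - μ * d₂ (uμ x)))
    (Lμ : ℝ) (hLμ : Lμ = Lh + nA ^ 2 / μ)
    -- the accelerated gradient method applied to f_μ on Q₁
    (x y z : ℕ → E₁) (α C : ℕ → ℝ)
    (hx0Q : x 0 ∈ Q₁) (hx0min : IsMinOn d₁ Q₁ (x 0)) (hd₁x0 : d₁ (x 0) = 0)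
    (hy0 : y 0 = x 0) (hz0 : z 0 = x 0)
    (hC0 : C 0 = 0) (hα0 : α 0 = 0)
    (hroot : ∀ k, C k + α (k + 1) = Lμ * α (k + 1) ^ 2)
    (hlargest : ∀ k, ∀ a : ℝ, C k + a = Lμ * a ^ 2 → a ≤ α (k + 1))
    (hC : ∀ k, C (k + 1) = C k + α (k + 1))
    (hxr : ∀ k, x (k + 1) = (C (k + 1))⁻¹ • (α (k + 1) • z k + C k • y k))
    (hzr : ∀ k, z (k + 1) ∈ Q₁ ∧ IsMinOn
      (fun w => V₁ (z k) w + α (k + 1) *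
        (fμ (x (k + 1)) + ⟪gh (x (k + 1)) + Astar (uμ (x (k + 1))), w - x (k + 1)⟫))
      Q₁ (z (k + 1)))
    (hyr : ∀ k, y (k + 1) = (C (k + 1))⁻¹ • (α (k + 1) • z (k + 1) + C k • y k))
    (xstar : E₁) (hxsQ : xstar ∈ Q₁) (hxsmin : ∀ w ∈ Q₁, f xstar ≤ f w) :
    0 ≤ f (y N) - f xstar ∧
      f (y N) - f xstar ≤ 4 * nA * Real.sqrt (D₁ * D₂) / ((N : ℝ) + 1)
        + 4 * Lh * D₁ / ((N : ℝ) + 1) ^ 2 := by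
  classical
  have hN1 : (0:ℝ) < (N:ℝ) + 1 := by positivity
  have hsq12 : (0:ℝ) < Real.sqrt (D₁ / D₂) := Real.sqrt_pos.2 (by positivity)
  have hμpos : 0 < μ := by rw [hμdef]; positivity
  have hLμpos : 0 < Lμ := by rw [hLμ]; positivity
  -- operator norm facts
  have opA : ∀ (v : E₁) (u : E₂), ⟪A v, u⟫ ≤ nA * (‖v‖ * ‖u‖) := by
    intro v u
    rcases eq_or_ne v 0 with rfl | hv
    · simp
    rcases eq_or_ne u 0 with rfl | hu
    · simp
    have hvn : 0 < ‖v‖ := norm_pos_iff.2 hv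
    have hun : 0 < ‖u‖ := norm_pos_iff.2 hu
    have hmem : ⟪A (‖v‖⁻¹ • v), ‖u‖⁻¹ • u⟫ ∈
        {r : ℝ | ∃ (x : E₁) (u : E₂), ‖x‖ ≤ 1 ∧ ‖u‖ ≤ 1 ∧ r = ⟪A x, u⟫} := by
      refine ⟨‖v‖⁻¹ • v, ‖u‖⁻¹ • u, ?_, ?_, rfl⟩
      · simp [norm_smul, abs_of_nonneg (le_of_lt (inv_pos.2 hvn)), inv_mul_cancel₀ (ne_of_gt hvn)]
      · simp [norm_smul, abs_of_nonneg (le_of_lt (inv_pos.2 hun)), inv_mul_cancel₀ (ne_of_gt hun)]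
    have h2 := hnA.2 hmem
    have h3 : ‖u‖⁻¹ * (‖v‖⁻¹ * ⟪A v, u⟫) ≤ nA := by
      simpa [map_smul, real_inner_smul_left, real_inner_smul_right] using h2
    have h4 := mul_le_mul_of_nonneg_left h3 (le_of_lt (mul_pos hvn hun))
    calc ⟪A v, u⟫ = ‖v‖ * ‖u‖ * (‖u‖⁻¹ * (‖v‖⁻¹ * ⟪A v, u⟫)) := by
          field_simp
        _ ≤ ‖v‖ * ‖u‖ * nA := h4
        _ = nA * (‖v‖ * ‖u‖) := by ring
  have opAstar : ∀ u : E₂, ‖Astar u‖ ≤ nA * ‖u‖ := by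
    intro u
    rcases eq_or_ne (Astar u) 0 with h0 | h0
    · rw [h0]; simp; positivity
    have hpos : 0 < ‖Astar u‖ := norm_pos_iff.2 h0
    have h1 : ‖Astar u‖ ^ 2 = ⟪A (Astar u), u⟫ := by
      rw [hadj]; rw [real_inner_self_eq_norm_sq]
    have h2 := opA (Astar u) u
    nlinarith
  -- strong concavity of the smoothed max and properties of uμ
  have hψconc : ∀ (w : E₁), ∀ u ∈ Q₂, ∀ v ∈ Q₂, ∀ a b : ℝ, 0 ≤ a → 0 ≤ b → a + b = 1 →
      a * (⟪A w, u⟫ - φ u - μ * d₂ u) + b * (⟪A w, v⟫ - φ v - μ * d₂ v)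
        + a * b * (μ / 2 * ‖u - v‖ ^ 2)
      ≤ ⟪A w, a • u + b • v⟫ - φ (a • u + b • v) - μ * d₂ (a • u + b • v) := by
    intro w u hu v hv a b ha hb hab
    have hlin : ⟪A w, a • u + b • v⟫ = a * ⟪A w, u⟫ + b * ⟪A w, v⟫ := by
      rw [inner_add_right, real_inner_smul_right, real_inner_smul_right]
    have hφ2 : φ (a • u + b • v) ≤ a * φ u + b * φ v := by
      simpa [smul_eq_mul] using hφconv.2 hu hv ha hb hab
    have hd2 : d₂ (a • u + b • v) ≤ a * d₂ u + b * d₂ v - a * b * ((1:ℝ)/2 * ‖u - v‖^2) := by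
      simpa [smul_eq_mul] using hd₂sc.2 hu hv ha hb hab
    have hd2' := mul_le_mul_of_nonneg_left hd2 (le_of_lt hμpos)
    rw [hlin]
    nlinarith
  have hsmax : ∀ (w : E₁), ∀ u ∈ Q₂,
      (⟪A w, u⟫ - φ u - μ * d₂ u) + μ / 2 * ‖u - uμ w‖ ^ 2
        ≤ ⟪A w, uμ w⟫ - φ (uμ w) - μ * d₂ (uμ w) := by
    intro w u hu
    exact ns_strong_max hQ₂conv (fun u hu v hv a b ha hb hab => hψconc w u hu v hv a b ha hb hab)
      (huμmem w) (huμmax w) hu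
  have huLip : ∀ a b : E₁, μ * ‖uμ a - uμ b‖ ≤ nA * ‖a - b‖ := by
    intro a b
    have h1 := hsmax a (uμ b) (huμmem b)
    have h2 := hsmax b (uμ a) (huμmem a)
    have hnormsym : ‖uμ b - uμ a‖ = ‖uμ a - uμ b‖ := norm_sub_rev _ _
    rw [hnormsym] at h1
    have hsum : μ * ‖uμ a - uμ b‖ ^ 2 ≤
        ⟪A a, uμ a⟫ - ⟪A a, uμ b⟫ - (⟪A b, uμ a⟫ - ⟪A b, uμ b⟫) := by linarith
    have hiden : ⟪A a, uμ a⟫ - ⟪A a, uμ b⟫ - (⟪A b, uμ a⟫ - ⟪A b, uμ b⟫)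
        = ⟪A (a - b), uμ a - uμ b⟫ := by
      rw [map_sub, inner_sub_left, inner_sub_right, inner_sub_right]
    have hbound := opA (a - b) (uμ a - uμ b)
    rcases eq_or_ne ‖uμ a - uμ b‖ 0 with h0 | h0
    · rw [h0, mul_zero]; positivity
    have h0' : 0 < ‖uμ a - uμ b‖ := lt_of_le_of_ne (norm_nonneg _) (Ne.symm h0)
    have hkey : μ * ‖uμ a - uμ b‖ ^ 2 ≤ nA * (‖a - b‖ * ‖uμ a - uμ b‖) := by
      rw [hiden] at hsum; linarith
    have h5 : (μ * ‖uμ a - uμ b‖) * ‖uμ a - uμ b‖ ≤ (nA * ‖a - b‖) * ‖uμ a - uμ b‖ := by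
      nlinarith [hkey]
    exact le_of_mul_le_mul_right h5 h0'
  -- the gradient mapping of fμ
  set g : E₁ → E₁ := fun w => gh w + Astar (uμ w) with hgdef
  have hglip : ∀ a b : E₁, ‖g a - g b‖ ≤ Lμ * ‖a - b‖ := by
    intro a b
    have h1 : g a - g b = (gh a - gh b) + (Astar (uμ a) - Astar (uμ b)) := by
      simp only [hgdef]; abel
    have h2 : ‖Astar (uμ a) - Astar (uμ b)‖ ≤ nA * ‖uμ a - uμ b‖ := by
      rw [← map_sub]; exact opAstar _
    have h3 : nA * ‖uμ a - uμ b‖ ≤ nA * (nA * ‖a - b‖ / μ) := by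
      have := huLip a b
      apply mul_le_mul_of_nonneg_left _ (le_of_lt hnApos)
      rw [le_div_iff₀ hμpos]; linarith [huLip a b]
    calc ‖g a - g b‖ ≤ ‖gh a - gh b‖ + ‖Astar (uμ a) - Astar (uμ b)‖ := by
          rw [h1]; exact norm_add_le _ _
      _ ≤ Lh * ‖a - b‖ + nA * (nA * ‖a - b‖ / μ) := by
          have := hghL a b; linarith
      _ = Lμ * ‖a - b‖ := by rw [hLμ]; field_simp
  have hconv : ∀ a w : E₁, fμ a + ⟪g a, w - a⟫ ≤ fμ w := by
    intro a w
    have h1 : h a + ⟪gh a, w - a⟫ ≤ h w :=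
      ns_convex_lb hhconv (mem_univ a) (mem_univ w) (hgh a)
    have h2 : ⟪A w, uμ a⟫ - φ (uμ a) - μ * d₂ (uμ a)
        ≤ ⟪A w, uμ w⟫ - φ (uμ w) - μ * d₂ (uμ w) := huμmax w (uμ a) (huμmem a)
    have h3 : ⟪A w, uμ a⟫ = ⟪A a, uμ a⟫ + ⟪Astar (uμ a), w - a⟫ := by
      rw [hadj w, hadj a, inner_sub_right]; ring
    have h4 : ⟪g a, w - a⟫ = ⟪gh a, w - a⟫ + ⟪Astar (uμ a), w - a⟫ := by
      simp only [hgdef]; rw [inner_add_left]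
    rw [hfμdef a, hfμdef w, h4]
    linarith
  have hgrad : ∀ a : E₁, HasGradientAt fμ (g a) a := by
    intro a
    rw [hasGradientAt_iff_hasFDerivAt]
    rw [hasFDerivAt_iff_isLittleO_nhds_zero]
    rw [Asymptotics.isLittleO_iff]
    intro c hc
    have hball : Metric.ball (0 : E₁) (c / Lμ) ∈ 𝓝 (0 : E₁) :=
      Metric.ball_mem_nhds 0 (by positivity)
    filter_upwards [hball] with v hv
    simp only [InnerProductSpace.toDual_apply_apply]
    have hlow : 0 ≤ fμ (a + v) - fμ a - ⟪g a, v⟫ := by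
      have := hconv a (a + v)
      have hav : a + v - a = v := by abel
      rw [hav] at this; linarith
    have hup : fμ (a + v) - fμ a - ⟪g a, v⟫ ≤ Lμ * ‖v‖ ^ 2 := by
      have h1 := hconv (a + v) a
      have hav : a - (a + v) = -v := by abel
      rw [hav, inner_neg_right] at h1
      have h2 : fμ (a + v) - fμ a - ⟪g a, v⟫ ≤ ⟪g (a + v) - g a, v⟫ := by
        rw [inner_sub_left]; linarith
      have h3 : ⟪g (a + v) - g a, v⟫ ≤ ‖g (a + v) - g a‖ * ‖v‖ := real_inner_le_norm _ _
      have h4 : ‖g (a + v) - g a‖ ≤ Lμ * ‖v‖ := by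
        have := hglip (a + v) a
        have hav2 : a + v - a = v := by abel
        rw [hav2] at this; exact this
      nlinarith [norm_nonneg v, norm_nonneg (g (a + v) - g a)]
    have hvball : ‖v‖ < c / Lμ := by simpa using hv
    rw [Real.norm_eq_abs, abs_of_nonneg hlow]
    have hvb2 : ‖v‖ * Lμ < c := (lt_div_iff₀ hLμpos).1 hvball
    have : Lμ * ‖v‖ ^ 2 ≤ c * ‖v‖ := by nlinarith [norm_nonneg v, hvb2]
    calc fμ (a + v) - fμ a - ⟪g a, v⟫ ≤ Lμ * ‖v‖ ^ 2 := hup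
      _ ≤ c * ‖v‖ := this
  have hdes : ∀ a b : E₁, fμ b ≤ fμ a + ⟪g a, b - a⟫ + Lμ / 2 * ‖b - a‖ ^ 2 :=
    ns_descent (le_of_lt hLμpos) hgrad hglip
  -- step size facts
  obtain ⟨hCnonneg, hαlb, hClb⟩ := ns_stepsize Lμ hLμpos C α hC0 hroot hlargest hC
  have hαpos : ∀ k, 0 < α (k + 1) := fun k =>
    lt_of_lt_of_le (by positivity) (hαlb k)
  have hCpos : ∀ k, 0 < C (k + 1) := by
    intro k
    rw [hC k]
    linarith only [hCnonneg k, hαpos k]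
  -- membership of the iterates
  have hzQ : ∀ k, z k ∈ Q₁ := by
    intro k
    cases k with
    | zero => rw [hz0]; exact hx0Q
    | succ k => exact (hzr k).1
  have hcomb : ∀ (k : ℕ) (w v : E₁), (C (k+1))⁻¹ • (α (k+1) • w + C k • v)
      = (α (k+1) / C (k+1)) • w + (C k / C (k+1)) • v := by
    intro k w v
    rw [smul_add, smul_smul, smul_smul]
    rw [div_eq_inv_mul, div_eq_inv_mul]
  have hyQ : ∀ k, y k ∈ Q₁ := by
    intro k
    induction k with
    | zero => rw [hy0]; exact hx0Q
    | succ k ih =>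
      rw [hyr k, hcomb k]
      apply hQ₁conv (hzQ (k+1)) ih
      · exact div_nonneg (le_of_lt (hαpos k)) (le_of_lt (hCpos k))
      · exact div_nonneg (hCnonneg k) (le_of_lt (hCpos k))
      · rw [← add_div, hC k, add_comm (C k)]
        exact div_self (ne_of_gt (by linarith [hαpos k, hCnonneg k]))
  -- Bregman divergence facts
  have hV₁lb : ∀ v w : E₁, 1 / 2 * ‖w - v‖ ^ 2 ≤ V₁ v w := by
    intro v w
    rw [hV₁]
    linarith only [hd₁sc v w]
  have hV₁nonneg : ∀ v w : E₁, 0 ≤ V₁ v w := fun v w =>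
    le_trans (by positivity) (hV₁lb v w)
  -- consequence of the z-step optimality
  have hstep : ∀ k, ∀ w ∈ Q₁,
      V₁ (z k) (z (k+1)) + α (k+1) * (fμ (x (k+1)) + ⟪g (x (k+1)), z (k+1) - x (k+1)⟫)
        + V₁ (z (k+1)) w
      ≤ V₁ (z k) w + α (k+1) * (fμ (x (k+1)) + ⟪g (x (k+1)), w - x (k+1)⟫) := by
    intro k w hw
    set p : E₁ := g (x (k+1)) with hp
    set q : E₁ := α (k+1) • p - gd₁ (z k) with hq
    set c : ℝ := - d₁ (z k) + ⟪gd₁ (z k), z k⟫ + α (k+1) * fμ (x (k+1))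
      - α (k+1) * ⟪p, x (k+1)⟫ with hcdef
    have hfuneq : (fun w => V₁ (z k) w + α (k + 1) *
        (fμ (x (k + 1)) + ⟪gh (x (k + 1)) + Astar (uμ (x (k + 1))), w - x (k + 1)⟫))
        = fun w => (d₁ w + ⟪q, w⟫) + c := by
      funext v
      simp only [hV₁, hq, hcdef, hp, hgdef, inner_sub_left, inner_sub_right,
        inner_add_left, real_inner_smul_left]
      ring
    have hmin := (hzr k).2
    rw [hfuneq] at hmin
    have hgradℓ : HasGradientAt (fun w => (d₁ w + ⟪q, w⟫) + c)
        (gd₁ (z (k+1)) + q) (z (k+1)) :=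
      ns_hasGradientAt_add_const c (ns_hasGradientAt_add (hgd₁ _) (ns_hasGradientAt_inner q _))
    have hfoc := ns_foc hQ₁conv (hzr k).1 hw hmin hgradℓ
    have hexp : (V₁ (z k) w + α (k+1) * (fμ (x (k+1)) + ⟪p, w - x (k+1)⟫))
        - (V₁ (z k) (z (k+1)) + α (k+1) * (fμ (x (k+1)) + ⟪p, z (k+1) - x (k+1)⟫)
          + V₁ (z (k+1)) w)
        = ⟪gd₁ (z (k+1)) + q, w - z (k+1)⟫ := by
      simp only [hV₁, hq, inner_add_left, inner_sub_left, inner_sub_right,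
        real_inner_smul_left]
      ring
    linarith only [hfoc, hexp]
  -- the main invariant of the accelerated method
  have hinv : ∀ k, ∀ w ∈ Q₁,
      C k * fμ (y k) + V₁ (z k) w ≤ C k * fμ w + V₁ (z 0) w := by
    intro k
    induction k with
    | zero =>
      intro w hw
      rw [hC0]
      simp
    | succ k ih =>
      intro w hw
      have hC'pos := hCpos k
      have hC'ne : C (k+1) ≠ 0 := ne_of_gt hC'pos
      have hLa : Lμ * α (k+1) ^ 2 = C (k+1) := by rw [hC k]; exact (hroot k).symm
      have f1 := hdes (x (k+1)) (y (k+1))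
      have f2 : y (k+1) - x (k+1) = (α (k+1) / C (k+1)) • (z (k+1) - z k) := by
        rw [hyr k, hxr k, ← smul_sub]
        have hv : α (k + 1) • z (k + 1) + C k • y k - (α (k + 1) • z k + C k • y k)
            = α (k+1) • (z (k+1) - z k) := by
          rw [smul_sub]; abel
        rw [hv, smul_smul, div_eq_inv_mul]
      have f3 : ⟪g (x (k+1)), y (k+1) - x (k+1)⟫
          = α (k+1) / C (k+1) * ⟪g (x (k+1)), z (k+1) - z k⟫ := by
        rw [f2, real_inner_smul_right]
      have f4 : ‖y (k+1) - x (k+1)‖ ^ 2 = (α (k+1) / C (k+1)) ^ 2 * ‖z (k+1) - z k‖ ^ 2 := by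
        rw [f2, norm_smul, mul_pow, Real.norm_eq_abs, sq_abs]
      have f5 : C (k+1) * fμ (y (k+1)) ≤ C (k+1) * fμ (x (k+1))
          + α (k+1) * ⟪g (x (k+1)), z (k+1) - z k⟫ + 1 / 2 * ‖z (k+1) - z k‖ ^ 2 := by
        have h1 := mul_le_mul_of_nonneg_left f1 (le_of_lt hC'pos)
        rw [f3, f4] at h1
        set In : ℝ := ⟪g (x (k+1)), z (k+1) - z k⟫ with hIn
        set S : ℝ := ‖z (k+1) - z k‖ ^ 2 with hS
        have e1 : C (k+1) * (α (k+1) / C (k+1)) = α (k+1) := by field_simp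
        have e2 : Lμ / 2 * (α (k+1) / C (k+1)) ^ 2 = 1 / (2 * C (k+1)) := by
          rw [div_pow, ← hLa]
          field_simp [ne_of_gt (hαpos k), ne_of_gt hLμpos]
        have e3 : 1 / (2 * C (k+1)) * (C (k+1) * S) = 1 / 2 * S := by
          field_simp
        have h2 : C (k+1) * (fμ (x (k+1)) + α (k+1) / C (k+1) * In
            + Lμ / 2 * ((α (k+1) / C (k+1)) ^ 2 * S))
            = C (k+1) * fμ (x (k+1)) + α (k+1) * In + 1 / 2 * S := by
          calc C (k+1) * (fμ (x (k+1)) + α (k+1) / C (k+1) * In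
              + Lμ / 2 * ((α (k+1) / C (k+1)) ^ 2 * S))
              = C (k+1) * fμ (x (k+1)) + (C (k+1) * (α (k+1) / C (k+1))) * In
                + (Lμ / 2 * (α (k+1) / C (k+1)) ^ 2) * (C (k+1) * S) := by ring
            _ = C (k+1) * fμ (x (k+1)) + α (k+1) * In
                + 1 / (2 * C (k+1)) * (C (k+1) * S) := by rw [e1, e2]
            _ = C (k+1) * fμ (x (k+1)) + α (k+1) * In + 1 / 2 * S := by rw [e3]
        rw [h2] at h1
        exact h1
      have f6 : C k * (fμ (x (k+1)) + ⟪g (x (k+1)), y k - x (k+1)⟫) ≤ C k * fμ (y k) :=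
        mul_le_mul_of_nonneg_left (hconv (x (k+1)) (y k)) (hCnonneg k)
      have f7 : α (k+1) * (fμ (x (k+1)) + ⟪g (x (k+1)), w - x (k+1)⟫) ≤ α (k+1) * fμ w :=
        mul_le_mul_of_nonneg_left (hconv (x (k+1)) w) (le_of_lt (hαpos k))
      have hx'eq : C (k+1) • x (k+1) = α (k+1) • z k + C k • y k := by
        rw [hxr k, smul_smul, mul_inv_cancel₀ hC'ne, one_smul]
      have hvec : C k • (y k - x (k+1)) + α (k+1) • (z (k+1) - x (k+1))
          = α (k+1) • (z (k+1) - z k) := by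
        have h3 : C k • (y k - x (k+1)) + α (k+1) • (z (k+1) - x (k+1))
            = (C k • y k + α (k+1) • z (k+1)) - (C k + α (k+1)) • x (k+1) := by
          rw [smul_sub, smul_sub, add_smul]; abel
        rw [h3, ← hC k, hx'eq, smul_sub]
        abel
      have f8 : C k * ⟪g (x (k+1)), y k - x (k+1)⟫ + α (k+1) * ⟪g (x (k+1)), z (k+1) - x (k+1)⟫
          = α (k+1) * ⟪g (x (k+1)), z (k+1) - z k⟫ := by
        rw [← real_inner_smul_right, ← real_inner_smul_right, ← real_inner_smul_right,
          ← inner_add_right, hvec]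
      have f9 := hstep k w hw
      have f10 := hV₁lb (z k) (z (k+1))
      have ihw := ih w hw
      have hCexp : C (k+1) * fμ w = C k * fμ w + α (k+1) * fμ w := by
        rw [hC k]; ring
      have hCexp2 : C (k+1) * fμ (x (k+1)) = C k * fμ (x (k+1)) + α (k+1) * fμ (x (k+1)) := by
        rw [hC k]; ring
      linarith only [f5, f6, f7, f8, f9, f10, ihw, hCexp, hCexp2]
  -- comparing f and fμ
  have hbAbove : ∀ w : E₁, ∀ u ∈ Q₂, ⟪A w, u⟫ - φ u
      ≤ (⟪A w, uμ w⟫ - φ (uμ w) - μ * d₂ (uμ w)) + μ * D₂ := by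
    intro w u hu
    have h1 := huμmax w u hu
    have h2 : d₂ u ≤ D₂ := hD₂.2 ⟨u, hu, rfl⟩
    have h3 := mul_le_mul_of_nonneg_left h2 (le_of_lt hμpos)
    linarith only [h1, h3]
  have hbdd : ∀ w : E₁, BddAbove ((fun u => ⟪A w, u⟫ - φ u) '' Q₂) := by
    intro w
    refine ⟨(⟪A w, uμ w⟫ - φ (uμ w) - μ * d₂ (uμ w)) + μ * D₂, ?_⟩
    rintro r ⟨u, hu, rfl⟩
    exact hbAbove w u hu
  have hflow : ∀ w : E₁, fμ w ≤ f w := by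
    intro w
    rw [hfdef w, hfμdef w]
    have h1 : ⟪A w, uμ w⟫ - φ (uμ w) ∈ (fun u => ⟪A w, u⟫ - φ u) '' Q₂ :=
      ⟨uμ w, huμmem w, rfl⟩
    have h2 := le_csSup (hbdd w) h1
    have h3 : 0 ≤ μ * d₂ (uμ w) := mul_nonneg (le_of_lt hμpos) (hd₂0 _ (huμmem w))
    linarith only [h2, h3]
  have hfhigh : ∀ w : E₁, f w ≤ fμ w + μ * D₂ := by
    intro w
    rw [hfdef w, hfμdef w]
    have h1 : sSup ((fun u => ⟪A w, u⟫ - φ u) '' Q₂)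
        ≤ (⟪A w, uμ w⟫ - φ (uμ w) - μ * d₂ (uμ w)) + μ * D₂ := by
      apply csSup_le (hQ₂ne.image _)
      rintro r ⟨u, hu, rfl⟩
      exact hbAbove w u hu
    linarith only [h1]
  -- the gap bound
  have hinvN := hinv N xstar hxsQ
  have hVN := hV₁nonneg (z N) xstar
  have hfoc0 := ns_foc hQ₁conv hx0Q hxsQ hx0min (hgd₁ (x 0))
  have hV0 : V₁ (z 0) xstar ≤ D₁ := by
    rw [hz0, hV₁, hd₁x0]
    have h4 : d₁ xstar ≤ D₁ := hD₁.2 ⟨xstar, hxsQ, rfl⟩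
    linarith only [h4, hfoc0]
  have hCNpos : 0 < C N := by
    obtain ⟨m, hm⟩ := Nat.exists_eq_succ_of_ne_zero (by omega : N ≠ 0)
    rw [hm]
    exact hCpos m
  have hgap : C N * (fμ (y N) - fμ xstar) ≤ D₁ := by
    rw [mul_sub]
    linarith only [hinvN, hVN, hV0]
  have hgap2 : fμ (y N) - fμ xstar ≤ D₁ / C N := by
    rw [le_div_iff₀ hCNpos]
    linarith only [hgap, mul_comm (C N) (fμ (y N) - fμ xstar)]
  have hCNlb := hClb N hN
  have hgap3 : D₁ / C N ≤ 4 * Lμ * D₁ / (((N:ℝ) + 1) ^ 2) := by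
    rw [div_le_div_iff₀ hCNpos (by positivity)]
    rw [div_le_iff₀ (by positivity : (0:ℝ) < 4 * Lμ)] at hCNlb
    nlinarith [hD₁pos.le, hCNlb]
  have hyNQ := hyQ N
  have hlower : 0 ≤ f (y N) - f xstar := by
    linarith only [hxsmin (y N) hyNQ]
  refine ⟨hlower, ?_⟩
  have hup1 : f (y N) - f xstar ≤ μ * D₂ + 4 * Lμ * D₁ / (((N:ℝ) + 1) ^ 2) := by
    linarith only [hfhigh (y N), hflow xstar, hgap2, hgap3]
  -- the arithmetic identity
  set s1 : ℝ := Real.sqrt D₁ with hs1def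
  set s2 : ℝ := Real.sqrt D₂ with hs2def
  have hs1 : s1 ^ 2 = D₁ := Real.sq_sqrt hD₁pos.le
  have hs2 : s2 ^ 2 = D₂ := Real.sq_sqrt hD₂pos.le
  have hs1p : 0 < s1 := Real.sqrt_pos.2 hD₁pos
  have hs2p : 0 < s2 := Real.sqrt_pos.2 hD₂pos
  have hsdiv : Real.sqrt (D₁ / D₂) = s1 / s2 := Real.sqrt_div hD₁pos.le D₂
  have hsmul : Real.sqrt (D₁ * D₂) = s1 * s2 := Real.sqrt_mul hD₁pos.le D₂
  have harith : μ * D₂ + 4 * Lμ * D₁ / (((N:ℝ) + 1) ^ 2)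
      = 4 * nA * Real.sqrt (D₁ * D₂) / ((N : ℝ) + 1) + 4 * Lh * D₁ / ((N : ℝ) + 1) ^ 2 := by
    rw [hLμ, hμdef, hsdiv, hsmul, ← hs1, ← hs2]
    have hn1 : ((N:ℝ) + 1) ≠ 0 := ne_of_gt hN1
    field_simp
    ring
  linarith only [hup1, harith]
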